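/- Let ω > 0 and let δ1, δ2 be nonzero complex numbers satisfying |δ1| + |δ2| ≥ 1, −1 ≤ |δ1| − |δ2| ≤ 1. Define θ1 = arccos((1 + |δ1|² − |δ2|²)/(2·|δ1|)) and θ2 = arccos((1 + |δ2|² − |δ1|²)/(2·|δ2|)) (the triangle conditions guarantee both arccos arguments lie in [−1, 1]). Then for every choice of sign ± and all integers u, v for which τ1 = (Arg(δ1) + (2u − 1)·π ± θ1)/ω ≥ 0 and τ2 = (Arg(δ2) + (2v − 1)·π ∓ θ2)/ω ≥ 0, one has 1 + δ1·e^{−iωτ1} + δ2·e^{−iωτ2} = 0. -/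

import Mathlib

open Complex in
lemma scc_key_complex (r1 r2 a b : ℝ)
    (h1 : r1 * Real.cos a + r2 * Real.cos b = 1)
    (h2 : r1 * Real.sin a = r2 * Real.sin b) :
    1 - (r1:ℂ) * Complex.exp ((-a : ℝ) * I) - (r2:ℂ) * Complex.exp ((b : ℝ) * I) = 0 := by
  have h1' : (r1:ℂ) * Real.cos a + (r2:ℂ) * Real.cos b = 1 := by exact_mod_cast h1
  have h2' : (r1:ℂ) * Real.sin a = (r2:ℂ) * Real.sin b := by exact_mod_cast h2
  push_cast
  rw [Complex.exp_mul_I, Complex.exp_mul_I, Complex.cos_neg, Complex.sin_neg]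
  rw [← Complex.ofReal_cos, ← Complex.ofReal_sin, ← Complex.ofReal_cos, ← Complex.ofReal_sin]
  linear_combination -h1' + I * h2'

open Complex in
lemma scc_term (δ : ℂ) (hδ : δ ≠ 0) (ω : ℝ) (hω : ω ≠ 0) (x : ℝ) (n : ℤ) (τ : ℝ)
    (hτ : τ = (Complex.arg δ + (2 * (n : ℝ) - 1) * Real.pi + x) / ω) :
    δ * Complex.exp (-(I * (ω : ℂ) * (τ : ℂ)))
      = -(‖δ‖ : ℂ) * Complex.exp ((-x : ℝ) * I) := by
  have hωτ : ω * τ = Complex.arg δ + (2 * (n : ℝ) - 1) * Real.pi + x := by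
    rw [hτ]; field_simp
  conv_lhs => rw [← Complex.norm_mul_exp_arg_mul_I δ]
  rw [mul_assoc, ← Complex.exp_add]
  have hexp : (Complex.arg δ : ℂ) * I + -(I * (ω : ℂ) * (τ : ℂ))
      = (-x : ℝ) * I + (-n : ℤ) * (2 * Real.pi * I) + Real.pi * I := by
    rw [show -(I * (ω : ℂ) * (τ : ℂ)) = -(((ω * τ : ℝ) : ℂ) * I) by push_cast; ring, hωτ]
    push_cast
    ring
  rw [hexp, Complex.exp_add, Complex.exp_add, Complex.exp_int_mul_two_pi_mul_I,
    Complex.exp_pi_mul_I]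
  ring

open Complex in
/-- Parametrization of the stability crossing curves: under
the triangle conditions, for either choice of sign `ε = ±1` and any integers
`u, v` making the delays nonnegative, the delay pair
`τ1 = (Arg δ1 + (2u−1)π + ε·θ1)/ω`, `τ2 = (Arg δ2 + (2v−1)π − ε·θ2)/ω`
satisfies `1 + δ1·e^{−iωτ1} + δ2·e^{−iωτ2} = 0`. -/
theorem stability_crossing_curves
    (δ1 δ2 : ℂ) (ω : ℝ) (hω : 0 < ω)
    (hδ1 : δ1 ≠ 0) (hδ2 : δ2 ≠ 0)
    (htri1 : 1 ≤ ‖δ1‖ + ‖δ2‖)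
    (htri2 : -1 ≤ ‖δ1‖ - ‖δ2‖)
    (htri3 : ‖δ1‖ - ‖δ2‖ ≤ 1)
    (θ1 θ2 : ℝ)
    (hθ1 : θ1 = Real.arccos
      ((1 + ‖δ1‖ ^ 2 - ‖δ2‖ ^ 2) / (2 * ‖δ1‖)))
    (hθ2 : θ2 = Real.arccos
      ((1 + ‖δ2‖ ^ 2 - ‖δ1‖ ^ 2) / (2 * ‖δ2‖)))
    (ε : ℝ) (hε : ε = 1 ∨ ε = -1)
    (u v : ℤ)
    (τ1 τ2 : ℝ)
    (hτ1def : τ1 = (Complex.arg δ1 + (2 * (u : ℝ) - 1) * Real.pi + ε * θ1) / ω)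
    (hτ2def : τ2 = (Complex.arg δ2 + (2 * (v : ℝ) - 1) * Real.pi - ε * θ2) / ω)
    (hτ1 : 0 ≤ τ1) (hτ2 : 0 ≤ τ2) :
    1 + δ1 * Complex.exp (-(I * (ω : ℂ) * (τ1 : ℂ)))
      + δ2 * Complex.exp (-(I * (ω : ℂ) * (τ2 : ℂ))) = 0 := by
  set r1 := ‖δ1‖ with hr1def
  set r2 := ‖δ2‖ with hr2def
  have hr1 : 0 < r1 := norm_pos_iff.mpr hδ1
  have hr2 : 0 < r2 := norm_pos_iff.mpr hδ2
  set c1 : ℝ := (1 + r1 ^ 2 - r2 ^ 2) / (2 * r1) with hc1def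
  set c2 : ℝ := (1 + r2 ^ 2 - r1 ^ 2) / (2 * r2) with hc2def
  have hc1u : c1 ≤ 1 := by
    rw [hc1def, div_le_one (by positivity)]
    nlinarith [sq_nonneg (r1 - 1), sq_nonneg (r1 + r2 - 1)]
  have hc1l : -1 ≤ c1 := by
    rw [hc1def, le_div_iff₀ (by positivity)]
    nlinarith [sq_nonneg (r1 + 1)]
  have hc2u : c2 ≤ 1 := by
    rw [hc2def, div_le_one (by positivity)]
    nlinarith [sq_nonneg (r2 - 1), sq_nonneg (r1 + r2 - 1)]
  have hc2l : -1 ≤ c2 := by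
    rw [hc2def, le_div_iff₀ (by positivity)]
    nlinarith [sq_nonneg (r2 + 1)]
  have hcos1 : Real.cos θ1 = c1 := by rw [hθ1]; exact Real.cos_arccos hc1l hc1u
  have hcos2 : Real.cos θ2 = c2 := by rw [hθ2]; exact Real.cos_arccos hc2l hc2u
  have hsin1 : Real.sin θ1 = Real.sqrt (1 - c1 ^ 2) := by
    rw [hθ1, Real.sin_arccos]
  have hsin2 : Real.sin θ2 = Real.sqrt (1 - c2 ^ 2) := by
    rw [hθ2, Real.sin_arccos]
  have h1 : r1 * Real.cos θ1 + r2 * Real.cos θ2 = 1 := by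
    rw [hcos1, hcos2, hc1def, hc2def]; field_simp; ring
  have h2 : r1 * Real.sin θ1 = r2 * Real.sin θ2 := by
    rw [hsin1, hsin2]
    rw [← Real.sqrt_sq hr1.le, ← Real.sqrt_sq hr2.le, ← Real.sqrt_mul (sq_nonneg r1),
      ← Real.sqrt_mul (sq_nonneg r2)]
    congr 1
    rw [hc1def, hc2def]
    field_simp
    ring
  have hωne : ω ≠ 0 := hω.ne'
  have e1 := scc_term δ1 hδ1 ω hωne (ε * θ1) u τ1 hτ1def
  have e2 := scc_term δ2 hδ2 ω hωne (-(ε * θ2)) v τ2 (by rw [hτ2def]; ring_nf)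
  rw [e1, e2]
  rcases hε with hε | hε
  · subst hε
    have key := scc_key_complex r1 r2 θ1 θ2 h1 h2
    simp only [one_mul, neg_neg] at *
    linear_combination key
  · subst hε
    have key := scc_key_complex r2 r1 θ2 θ1 (by linarith) h2.symm
    simp only [neg_neg, neg_mul, one_mul] at *
    linear_combination key
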